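/- For n ≥ 4, the poset P_n (two butterfly posets T_n glued along 0̂ and 1̂) does not admit any triple assignment, and hence does not admit any R-labeling. -/

import Mathlib

open Finset

section ChainDefs
variable {α : Type*} [PartialOrder α]

/-- `l` is a saturated (maximal) chain from `x` to `y`, given as a list. -/
def SatChain (x y : α) (l : List α) : Prop :=
  l.Chain' (· ⋖ ·) ∧ l.head? = some x ∧ l.getLast? = some y

/-- A chain is rising for `τ` (where `true` codes the letter 𝐚 and `false` codes 𝐛)
if every consecutive triple is mapped to 𝐚. -/
def RisingOn (τ : α → α → α → Bool) (l : List α) : Prop :=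
  ∀ (i : ℕ) (h : i + 2 < l.length),
    τ (l.get ⟨i, by omega⟩) (l.get ⟨i + 1, by omega⟩) (l.get ⟨i + 2, by omega⟩) = true

/-- A triple assignment: every non-trivial interval has a unique rising maximal chain. -/
def IsTripleAssignment (τ : α → α → α → Bool) : Prop :=
  ∀ x y : α, x < y → ∃! l : List α, SatChain x y l ∧ RisingOn τ l

/-- An `R`-labeling with label set `Λ` and relation `sim`: every non-trivial interval
has a unique maximal chain whose successive labels are related by `sim`. -/
def IsRLabeling {Λ : Type*} (sim : Λ → Λ → Prop) (lab : α → α → Λ) : Prop :=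
  ∀ x y : α, x < y → ∃! l : List α,
    SatChain x y l ∧ ∀ (i : ℕ) (h : i + 2 < l.length),
      sim (lab (l.get ⟨i, by omega⟩) (l.get ⟨i + 1, by omega⟩))
          (lab (l.get ⟨i + 1, by omega⟩) (l.get ⟨i + 2, by omega⟩))

/-- `y` is a breakpoint for `τ`: the value `τ x y z` does not depend on `x ⋖ y` and `y ⋖ z`. -/
def IsBreakpoint (τ : α → α → α → Bool) (y : α) : Prop :=
  ∃ v : Bool, ∀ x z : α, x ⋖ y → y ⋖ z → τ x y z = v

end ChainDefs

section FlagDefs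
variable {α : Type*} [PartialOrder α] [BoundedOrder α]

/-- `rk` is a rank function making the bounded poset graded. -/
def IsGraded (rk : α → ℕ) : Prop :=
  rk ⊥ = 0 ∧ ∀ x y : α, x ⋖ y → rk y = rk x + 1

/-- Flag `f`-vector entry: the number of chains `0̂ < x₁ < ⋯ < x_k < 1̂`
passing exactly through the ranks in `S`. -/
noncomputable def flagF (rk : α → ℕ) (S : Finset ℕ) : ℕ :=
  Nat.card {c : Finset α // IsChain (· ≤ ·) (↑c : Set α) ∧ c.image rk = S ∧
    c.card = S.card ∧ ∀ x ∈ c, ⊥ < x ∧ x < ⊤}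

/-- Flag `h`-vector entry: `h_S = ∑_{T ⊆ S} (-1)^{|S∖T|} f_T`. -/
noncomputable def flagH (rk : α → ℕ) (S : Finset ℕ) : ℤ :=
  ∑ T ∈ S.powerset, (-1) ^ (S.card - T.card) * (flagF rk T : ℤ)

/-- The descent set of a maximal chain `0̂ = x₀ ⋖ x₁ ⋖ ⋯ ⋖ x_n = 1̂` with respect to `τ`:
those `i` with `τ (x_{i-1}) (x_i) (x_{i+1}) = 𝐛`. -/
def descSet (τ : α → α → α → Bool) (l : List α) : Finset ℕ :=
  (Finset.Icc 1 (l.length - 2)).filter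
    (fun i => τ (l.getD (i - 1) ⊥) (l.getD i ⊥) (l.getD (i + 1) ⊥) = false)

end FlagDefs

/-- The butterfly poset `T_n`: one element at ranks `0` and `n` and two elements
(`side = true/false`) at each rank `1 ≤ i ≤ n-1`; any two elements of distinct
ranks are comparable. -/
structure Butt (n : ℕ) where
  rk : ℕ
  side : Bool
  hle : rk ≤ n
  hb : rk = 0 ∨ rk = n → side = false

theorem Butt.ext' {n : ℕ} {x y : Butt n} (h1 : x.rk = y.rk) (h2 : x.side = y.side) :
    x = y := by
  cases x; cases y; simp_all

instance {n : ℕ} : PartialOrder (Butt n) where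
  le x y := x = y ∨ x.rk < y.rk
  le_refl x := Or.inl rfl
  le_trans x y z hxy hyz := by
    rcases hxy with rfl | h
    · exact hyz
    · rcases hyz with rfl | h'
      · exact Or.inr h
      · exact Or.inr (h.trans h')
  le_antisymm x y hxy hyx := by
    rcases hxy with rfl | h
    · rfl
    · rcases hyx with rfl | h'
      · rfl
      · omega

instance {n : ℕ} : BoundedOrder (Butt n) where
  bot := ⟨0, false, Nat.zero_le n, fun _ => rfl⟩
  top := ⟨n, false, le_refl n, fun _ => rfl⟩
  bot_le x := by
    by_cases h : x.rk = 0
    · exact Or.inl (Butt.ext' h.symm (x.hb (Or.inl h)).symm)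
    · exact Or.inr (by simpa using Nat.pos_of_ne_zero h)
  le_top x := by
    by_cases h : x.rk = n
    · exact Or.inl (Butt.ext' h (x.hb (Or.inr h)))
    · exact Or.inr (lt_of_le_of_ne x.hle h)

/-- The poset `P_n`: two copies (`copy = true/false`) of the butterfly poset `T_n`
glued along their minimum and maximum elements. -/
structure Glue (n : ℕ) where
  rk : ℕ
  side : Bool
  copy : Bool
  hle : rk ≤ n
  hb : rk = 0 ∨ rk = n → side = false ∧ copy = false

theorem Glue.ext' {n : ℕ} {x y : Glue n} (h1 : x.rk = y.rk) (h2 : x.side = y.side)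
    (h3 : x.copy = y.copy) : x = y := by
  cases x; cases y; simp_all

instance {n : ℕ} : PartialOrder (Glue n) where
  le x y := x = y ∨ (x.rk < y.rk ∧ (x.copy = y.copy ∨ x.rk = 0 ∨ y.rk = n))
  le_refl x := Or.inl rfl
  le_trans x y z hxy hyz := by
    rcases hxy with rfl | ⟨h1, h2⟩
    · exact hyz
    · rcases hyz with rfl | ⟨h3, h4⟩
      · exact Or.inr ⟨h1, h2⟩
      · refine Or.inr ⟨h1.trans h3, ?_⟩
        rcases h2 with hc | h0 | hn
        · rcases h4 with hc' | h0' | hn'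
          · exact Or.inl (hc.trans hc')
          · omega
          · exact Or.inr (Or.inr hn')
        · exact Or.inr (Or.inl h0)
        · have := z.hle; omega
  le_antisymm x y hxy hyx := by
    rcases hxy with rfl | ⟨h1, _⟩
    · rfl
    · rcases hyx with rfl | ⟨h2, _⟩
      · rfl
      · omega

instance {n : ℕ} : BoundedOrder (Glue n) where
  bot := ⟨0, false, false, Nat.zero_le n, fun _ => ⟨rfl, rfl⟩⟩
  top := ⟨n, false, false, le_refl n, fun _ => ⟨rfl, rfl⟩⟩
  bot_le x := by
    by_cases h : x.rk = 0
    · exact Or.inl (Glue.ext' h.symm (x.hb (Or.inl h)).1.symm (x.hb (Or.inl h)).2.symm)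
    · exact Or.inr ⟨by simpa using Nat.pos_of_ne_zero h, Or.inr (Or.inl rfl)⟩
  le_top x := by
    by_cases h : x.rk = n
    · exact Or.inl (Glue.ext' h (x.hb (Or.inr h)).1 (x.hb (Or.inr h)).2)
    · exact Or.inr ⟨lt_of_le_of_ne x.hle h, Or.inr (Or.inr rfl)⟩

/-- Eulerian condition (counting form): every non-trivial interval has as many
elements of even rank as of odd rank. -/
def EulerianCount {α : Type*} [PartialOrder α] (rk : α → ℕ) : Prop :=
  ∀ x y : α, x < y →
    Nat.card {z : α // z ∈ Set.Icc x y ∧ Even (rk z - rk x)} =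
    Nat.card {z : α // z ∈ Set.Icc x y ∧ ¬ Even (rk z - rk x)}

section AbIndex

/-- The variable 𝐚 of the non-commutative polynomial ring `ℤ⟨𝐚,𝐛⟩`,
realized as the monoid algebra of the free monoid on two letters. -/
noncomputable def abA : MonoidAlgebra ℤ (FreeMonoid Bool) :=
  MonoidAlgebra.single (FreeMonoid.ofList [true]) 1

/-- The variable 𝐛. -/
noncomputable def abB : MonoidAlgebra ℤ (FreeMonoid Bool) :=
  MonoidAlgebra.single (FreeMonoid.ofList [false]) 1

/-- The 𝐚𝐛-monomial `u_S` of length `n-1`, with 𝐛 in the positions of `S`. -/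
def abMonomial (n : ℕ) (S : Finset ℕ) : FreeMonoid Bool :=
  FreeMonoid.ofList ((List.range (n - 1)).map (fun j => decide ((j + 1) ∉ S)))

/-- The 𝐚𝐛-index `Ψ(P) = ∑_S h_S u_S` of a bounded poset of rank `n`
with rank function `rk`. -/
noncomputable def abIndex {α : Type*} [PartialOrder α] [BoundedOrder α]
    (rk : α → ℕ) (n : ℕ) : MonoidAlgebra ℤ (FreeMonoid Bool) :=
  ∑ S ∈ (Finset.Icc 1 (n - 1)).powerset,
    MonoidAlgebra.single (abMonomial n S) (flagH rk S)

/-- The weight `wt(c)` of a maximal chain, as an 𝐚𝐛-monomial. -/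
def chainWeight {α : Type*} [PartialOrder α] [OrderBot α]
    (τ : α → α → α → Bool) (l : List α) : FreeMonoid Bool :=
  FreeMonoid.ofList ((List.range (l.length - 2)).map
    (fun i => τ (l.getD i ⊥) (l.getD (i + 1) ⊥) (l.getD (i + 2) ⊥)))

end AbIndex

section Helpers

variable {n : ℕ}

lemma Glue.le_def {x y : Glue n} :
    x ≤ y ↔ (x = y ∨ (x.rk < y.rk ∧ (x.copy = y.copy ∨ x.rk = 0 ∨ y.rk = n))) := Iff.rfl

lemma Glue.lt_def {x y : Glue n} :
    x < y ↔ x.rk < y.rk ∧ (x.copy = y.copy ∨ x.rk = 0 ∨ y.rk = n) := by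
  rw [lt_iff_le_and_ne, Glue.le_def]
  constructor
  · rintro ⟨h1 | h1, h2⟩
    · exact absurd h1 h2
    · exact h1
  · rintro ⟨h1, h2⟩
    exact ⟨Or.inr ⟨h1, h2⟩, fun h => by subst h; omega⟩

@[simp] lemma Glue.bot_rk : (⊥ : Glue n).rk = 0 := rfl
@[simp] lemma Glue.top_rk : (⊤ : Glue n).rk = n := rfl

lemma Glue.covBy_iff {x y : Glue n} : x ⋖ y ↔ x < y ∧ y.rk = x.rk + 1 := by
  constructor
  · intro h
    refine ⟨h.lt, ?_⟩
    by_contra hrk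
    have h1 := Glue.lt_def.mp h.lt
    have hy : y.rk ≤ n := y.hle
    have h2 : x.rk + 2 ≤ y.rk := by omega
    have hzn : ¬ (x.rk + 1 = 0 ∨ x.rk + 1 = n) := by omega
    set z : Glue n := ⟨x.rk + 1, false, if x.rk = 0 then y.copy else x.copy,
      by omega, fun hc => absurd hc hzn⟩ with hzdef
    have hz1 : z.rk = x.rk + 1 := rfl
    have hz2 : z.copy = if x.rk = 0 then y.copy else x.copy := rfl
    have hxz : x < z := by
      rw [Glue.lt_def, hz1, hz2]
      refine ⟨by omega, ?_⟩
      by_cases h0 : x.rk = 0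
      · exact Or.inr (Or.inl h0)
      · exact Or.inl (by simp [h0])
    have hzy : z < y := by
      rw [Glue.lt_def, hz1, hz2]
      refine ⟨by omega, ?_⟩
      by_cases h0 : x.rk = 0
      · exact Or.inl (by simp [h0])
      · rcases h1.2 with hc | hc | hc
        · exact Or.inl (by simp [h0, hc])
        · exact absurd hc h0
        · exact Or.inr (Or.inr hc)
    exact h.2 hxz hzy
  · rintro ⟨hlt, hrk⟩
    refine ⟨hlt, fun c h1 h2 => ?_⟩
    have := (Glue.lt_def.mp h1).1
    have := (Glue.lt_def.mp h2).1
    omega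

lemma Glue.lt_copy_eq {x y : Glue n} (h : x < y) (h0 : x.rk ≠ 0) (hn' : y.rk ≠ n) :
    x.copy = y.copy := by
  rcases (Glue.lt_def.mp h).2 with hc | hc | hc
  · exact hc
  · exact absurd hc h0
  · exact absurd hc hn'

section SatChainLemmas

lemma satChain_ne_nil {x y : Glue n} {l : List (Glue n)} (h : SatChain x y l) : l ≠ [] := by
  rintro rfl
  simp [SatChain] at h

lemma satChain_get_zero {x y : Glue n} {l : List (Glue n)} (h : SatChain x y l)
    (h0 : 0 < l.length) : l.get ⟨0, h0⟩ = x := by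
  rcases l with _ | ⟨a, l'⟩
  · simp at h0
  · have := h.2.1
    simp only [List.head?_cons, Option.some.injEq] at this
    simpa using this

lemma satChain_rk {x y : Glue n} {l : List (Glue n)} (h : SatChain x y l) :
    ∀ i (hi : i < l.length), (l.get ⟨i, hi⟩).rk = x.rk + i := by
  intro i
  induction i with
  | zero =>
    intro hi
    rw [satChain_get_zero h hi]
    omega
  | succ k ih =>
    intro hi
    have hk : k < l.length - 1 := by omega
    have hcov := List.isChain_iff_getElem.mp h.1 k (by omega)
    have h2 := (Glue.covBy_iff.mp hcov).2
    have h3 := ih (by omega)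
    simp only [List.get_eq_getElem] at h3 ⊢
    omega

lemma satChain_length {x y : Glue n} {l : List (Glue n)} (h : SatChain x y l) :
    x.rk + l.length = y.rk + 1 := by
  have hne := satChain_ne_nil h
  have hlen : 0 < l.length := List.length_pos_iff.mpr hne
  have hy : l.get ⟨l.length - 1, by omega⟩ = y := by
    have h2 := h.2.2
    rw [List.getLast?_eq_getLast hne] at h2
    have h3 := List.getLast_eq_getElem hne
    rw [h3] at h2
    exact Option.some_injective _ h2
  have := satChain_rk h (l.length - 1) (by omega)
  rw [hy] at this
  omega

lemma satChain_cons {x z y : Glue n} {l : List (Glue n)} (hcov : x ⋖ z)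
    (h : SatChain z y l) : SatChain x y (x :: l) := by
  refine ⟨List.isChain_cons.mpr ⟨?_, h.1⟩, rfl, ?_⟩
  · intro w hw
    rw [h.2.1] at hw
    rw [Option.mem_some_iff] at hw
    subst hw
    exact hcov
  · rw [List.getLast?_cons, h.2.2]
    rfl

lemma satChain_cons_decomp {x y : Glue n} {l : List (Glue n)} (h : SatChain x y l)
    (h2 : 2 ≤ l.length) :
    ∃ z l', l = x :: l' ∧ l'.head? = some z ∧ x ⋖ z ∧ SatChain z y l' := by
  rcases l with _ | ⟨a, l'⟩
  · simp at h2
  have hax : a = x := by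
    have := h.2.1
    simpa using this
  subst hax
  have hne : l' ≠ [] := by
    rcases l' with _ | _
    · simp at h2
    · simp
  obtain ⟨z, hz⟩ : ∃ z, l'.head? = some z := by
    rcases l' with _ | ⟨b, l''⟩
    · simp at hne
    · exact ⟨b, rfl⟩
  have hch := List.isChain_cons.mp h.1
  refine ⟨z, l', rfl, hz, hch.1 z hz, hch.2, hz, ?_⟩
  have := h.2.2
  rw [List.getLast?_cons] at this
  rw [List.getLast?_eq_getLast hne] at this ⊢
  simpa using this

lemma risingOn_trivial {τ : Glue n → Glue n → Glue n → Bool} {l : List (Glue n)}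
    (h : l.length ≤ 2) : RisingOn τ l := by
  intro i hi
  omega

lemma risingOn_cons {τ : Glue n → Glue n → Glue n → Bool} {x : Glue n} {l : List (Glue n)}
    (hl : 2 ≤ l.length) :
    RisingOn τ (x :: l) ↔
      τ x (l.get ⟨0, by omega⟩) (l.get ⟨1, by omega⟩) = true ∧ RisingOn τ l := by
  constructor
  · intro h
    refine ⟨?_, ?_⟩
    · have := h 0 (by simp; omega)
      simpa using this
    · intro i hi
      have := h (i + 1) (by simp; omega)
      simpa using this
  · rintro ⟨h0, h⟩ i hi
    cases i with
    | zero => simpa using h0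
    | succ k =>
      have hk : k + 2 < l.length := by simp at hi; omega
      have := h k hk
      simpa using this

end SatChainLemmas

lemma diamond_lemma {τ : Glue n → Glue n → Glue n → Bool} (hτ : IsTripleAssignment τ)
    {x z : Glue n} (hlt : x < z) (hrk : z.rk = x.rk + 2) :
    ∃! y : Glue n, (x ⋖ y ∧ y ⋖ z) ∧ τ x y z = true := by
  obtain ⟨l, ⟨hsat, hrise⟩, huniq⟩ := hτ x z hlt
  have hlen : l.length = 3 := by have := satChain_length hsat; omega
  obtain ⟨a, b, c, rfl⟩ : ∃ a b c, l = [a, b, c] := by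
    rcases l with _ | ⟨a, _ | ⟨b, _ | ⟨c, _ | ⟨d, l'⟩⟩⟩⟩ <;> simp at hlen
    exact ⟨a, b, c, rfl⟩
  obtain rfl : x = a := by have := hsat.2.1; simpa using this.symm
  obtain rfl : z = c := by have := hsat.2.2; simpa using this.symm
  have hch : x ⋖ b ∧ b ⋖ z := by
    have := hsat.1
    simpa [List.Chain', List.isChain_cons_cons] using this
  have hτb : τ x b z = true := by
    have := hrise 0 (by simp)
    simpa using this
  refine ⟨b, ⟨hch, hτb⟩, ?_⟩
  rintro y' ⟨⟨hc1, hc2⟩, hc3⟩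
  have hsat' : SatChain x z [x, y', z] := by
    refine ⟨?_, rfl, rfl⟩
    simp [List.Chain', List.isChain_cons_cons, hc1, hc2]
  have hrise' : RisingOn τ [x, y', z] := by
    intro i hi
    simp at hi
    obtain rfl : i = 0 := by omega
    simpa using hc3
  have := huniq [x, y', z] ⟨hsat', hrise'⟩
  simpa using this

lemma rank3_exists {τ : Glue n → Glue n → Glue n → Bool} (hτ : IsTripleAssignment τ)
    {x w : Glue n} (hlt : x < w) (hrk : w.rk = x.rk + 3) :
    ∃ y z, (x ⋖ y ∧ y ⋖ z ∧ z ⋖ w) ∧ τ x y z = true ∧ τ y z w = true := by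
  obtain ⟨l, ⟨hsat, hrise⟩, -⟩ := hτ x w hlt
  have hlen : l.length = 4 := by have := satChain_length hsat; omega
  obtain ⟨a, b, c, d, rfl⟩ : ∃ a b c d, l = [a, b, c, d] := by
    rcases l with _ | ⟨a, _ | ⟨b, _ | ⟨c, _ | ⟨d, _ | ⟨e, l'⟩⟩⟩⟩⟩ <;> simp at hlen
    exact ⟨a, b, c, d, rfl⟩
  obtain rfl : x = a := by have := hsat.2.1; simpa using this.symm
  obtain rfl : w = d := by have := hsat.2.2; simpa using this.symm
  have hch : x ⋖ b ∧ b ⋖ c ∧ c ⋖ w := by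
    have := hsat.1
    simpa [List.Chain', List.isChain_cons_cons] using this
  have h1 : τ x b c = true := by have := hrise 0 (by simp); simpa using this
  have h2 : τ b c w = true := by have := hrise 1 (by simp); simpa using this
  exact ⟨b, c, hch, h1, h2⟩

end Helpers


section GelDefs

/-- An interior element of `Glue n` at rank `i` with side `s` and copy `q`. -/
def gel (n i : ℕ) (s q : Bool) (h1 : 0 < i) (h2 : i < n) : Glue n :=
  ⟨i, s, q, h2.le, fun hc => absurd hc (by omega)⟩

variable {n i j : ℕ} {s s' q : Bool}

@[simp] lemma gel_rk {h1 h2} : (gel n i s q h1 h2).rk = i := rfl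
@[simp] lemma gel_side {h1 h2} : (gel n i s q h1 h2).side = s := rfl
@[simp] lemma gel_copy {h1 h2} : (gel n i s q h1 h2).copy = q := rfl

lemma gel_lt_gel {hi1 hi2 hj1 hj2} (h : i < j) :
    gel n i s q hi1 hi2 < gel n j s' q hj1 hj2 := by
  rw [Glue.lt_def]
  exact ⟨by simpa using h, Or.inl (by simp)⟩

lemma gel_covBy {hi1 hi2 hj1 hj2} (h : j = i + 1) :
    gel n i s q hi1 hi2 ⋖ gel n j s' q hj1 hj2 := by
  rw [Glue.covBy_iff]
  exact ⟨gel_lt_gel (by omega), by simp [h]⟩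

lemma bot_lt_gel {h1 h2} : (⊥ : Glue n) < gel n i s q h1 h2 := by
  rw [Glue.lt_def]
  exact ⟨by simpa using h1, Or.inr (Or.inl rfl)⟩

lemma gel_lt_top {h1 h2} : gel n i s q h1 h2 < (⊤ : Glue n) := by
  rw [Glue.lt_def]
  exact ⟨by simpa using h2, Or.inr (Or.inr rfl)⟩

lemma bot_covBy_gel {h1 h2} (h : i = 1) : (⊥ : Glue n) ⋖ gel n i s q h1 h2 := by
  rw [Glue.covBy_iff]
  exact ⟨bot_lt_gel, by simp [h]⟩

lemma eq_gel {x : Glue n} {p1 p2} (hi : x.rk = i) (hq : x.copy = q) :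
    x = gel n i x.side q p1 p2 :=
  Glue.ext' (by simpa using hi) (by simp) (by simpa using hq)

end GelDefs

lemma copy_rising (n : ℕ) (hn : 4 ≤ n) (τ : Glue n → Glue n → Glue n → Bool)
    (hτ : IsTripleAssignment τ) (q : Bool) :
    ∃ l, (SatChain (⊥ : Glue n) ⊤ l ∧ RisingOn τ l) ∧
      ∃ h2 : 2 < l.length, (l.get ⟨2, h2⟩).copy = q := by
  have p01 : 0 < 1 := one_pos
  have p02 : (0:ℕ) < 2 := by omega
  have p03 : (0:ℕ) < 3 := by omega
  have p1n : 1 < n := by omega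
  have p2n : 2 < n := by omega
  have p3n : 3 < n := by omega
  -- the unique rising chain from `Z u` (rank 2, side u, copy q) to ⊤
  choose R hP hU using fun u : Bool => hτ (gel n 2 u q p02 p2n) ⊤ gel_lt_top
  have hlenR : ∀ u, (R u).length = n - 1 := by
    intro u
    have := satChain_length (hP u).1
    simp at this
    omega
  have hR0 : ∀ u, (R u).get ⟨0, by rw [hlenR]; omega⟩ = gel n 2 u q p02 p2n :=
    fun u => satChain_get_zero (hP u).1 _
  have hlen2 : ∀ u : Bool, 1 < (R u).length := fun u => by rw [hlenR]; omega
  -- `W u` : the rank-3 element on that chain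
  let W : Bool → Glue n := fun u => (R u).get ⟨1, hlen2 u⟩
  have hWrk : ∀ u, (W u).rk = 3 := by
    intro u
    have := satChain_rk (hP u).1 1 (hlen2 u)
    simpa [W] using this
  have hZcovW : ∀ u, gel n 2 u q p02 p2n ⋖ W u := by
    intro u
    have h : (R u).get ⟨0, by rw [hlenR]; omega⟩ ⋖ (R u).get ⟨1, hlen2 u⟩ :=
      List.isChain_iff_getElem.mp (hP u).1.1 0 (by rw [hlenR]; omega)
    rw [hR0 u] at h
    exact h
  have hWcopy : ∀ u, (W u).copy = q := by
    intro u
    have := Glue.lt_copy_eq (hZcovW u).lt (by simp) (by rw [hWrk]; omega)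
    simpa using this.symm
  have hWeq : ∀ u, W u = gel n 3 (W u).side q p03 p3n :=
    fun u => eq_gel (hWrk u) (hWcopy u)
  -- the diamond maps B
  have hB : ∀ t v : Bool, ∃! u : Bool,
      τ (gel n 1 t q p01 p1n) (gel n 2 u q p02 p2n) (gel n 3 v q p03 p3n) = true := by
    intro t v
    obtain ⟨y0, ⟨⟨hcov1, hcov2⟩, hτ0⟩, huniq⟩ :=
      diamond_lemma hτ (gel_lt_gel (by omega) :
        gel n 1 t q p01 p1n < gel n 3 v q p03 p3n) (by simp)
    have hy0rk : y0.rk = 2 := by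
      have := (Glue.covBy_iff.mp hcov1).2; simp at this; omega
    have hy0copy : y0.copy = q := by
      have := Glue.lt_copy_eq hcov1.lt (by simp) (by rw [hy0rk]; omega)
      simpa using this.symm
    have hy0eq : y0 = gel n 2 y0.side q p02 p2n := eq_gel hy0rk hy0copy
    refine ⟨y0.side, by beta_reduce; rw [← hy0eq]; exact hτ0, ?_⟩
    intro u hu
    have h := huniq (gel n 2 u q p02 p2n) ⟨⟨gel_covBy rfl, gel_covBy rfl⟩, hu⟩
    rw [hy0eq] at h
    have := congrArg Glue.side h
    simpa using this
  choose B hB1 hB2 using hB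
  -- uniqueness for [Y t, ⊤]
  have hK : ∀ t : Bool, ∃! u : Bool,
      τ (gel n 1 t q p01 p1n) (gel n 2 u q p02 p2n) (W u) = true := by
    intro t
    obtain ⟨l0, ⟨hsat, hrise⟩, huniq⟩ := hτ (gel n 1 t q p01 p1n) ⊤ gel_lt_top
    have hlen0 : l0.length = n := by
      have := satChain_length hsat; simp at this; omega
    obtain ⟨z, l', rfl, hzhead, hzcov, hsat'⟩ := satChain_cons_decomp hsat (by omega)
    have hl'len : l'.length = n - 1 := by simp at hlen0; omega
    have hzrk : z.rk = 2 := by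
      have := (Glue.covBy_iff.mp hzcov).2; simp at this; omega
    have hzcopy : z.copy = q := by
      have := Glue.lt_copy_eq hzcov.lt (by simp) (by rw [hzrk]; omega)
      simpa using this.symm
    have hzeq : z = gel n 2 z.side q p02 p2n := eq_gel hzrk hzcopy
    have hrise2 := (risingOn_cons (by omega)).mp hrise
    have hsat'' : SatChain (gel n 2 z.side q p02 p2n) ⊤ l' := by rw [← hzeq]; exact hsat'
    have hl'R : l' = R z.side := hU z.side l' ⟨hsat'', hrise2.2⟩
    have hget0 : l'.get ⟨0, by omega⟩ = z := satChain_get_zero hsat' _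
    have hget1 : l'.get ⟨1, by omega⟩ = W z.side := by
      have h5 : l'[1]? = (R z.side)[1]? := by rw [hl'R]
      rw [List.getElem?_eq_getElem (by omega : 1 < l'.length),
          List.getElem?_eq_getElem (hlen2 z.side)] at h5
      have h6 := Option.some_injective _ h5
      exact h6
    have hex : τ (gel n 1 t q p01 p1n) (gel n 2 z.side q p02 p2n) (W z.side) = true := by
      have := hrise2.1
      rw [hget0, hget1, hzeq] at this
      exact this
    refine ⟨z.side, hex, ?_⟩
    intro u hu
    have hsatc : SatChain (gel n 1 t q p01 p1n) ⊤ (gel n 1 t q p01 p1n :: R u) :=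
      satChain_cons (gel_covBy rfl) (hP u).1
    have hrisec : RisingOn τ (gel n 1 t q p01 p1n :: R u) := by
      rw [risingOn_cons (by rw [hlenR]; omega)]
      refine ⟨?_, (hP u).2⟩
      rw [hR0 u]
      exact hu
    have := huniq _ ⟨hsatc, hrisec⟩
    have hRR : R u = l' := by
      injection this
    have hheads : (R u).head? = l'.head? := by rw [hRR]
    rw [(hP u).1.2.1, hzhead] at hheads
    have h7 := congrArg Glue.side (Option.some_injective _ hheads)
    simpa using h7
  -- existence for [⊥, Wv v]
  have hG : ∀ v : Bool, ∃ t u : Bool,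
      τ ⊥ (gel n 1 t q p01 p1n) (gel n 2 u q p02 p2n) = true ∧
      τ (gel n 1 t q p01 p1n) (gel n 2 u q p02 p2n) (gel n 3 v q p03 p3n) = true := by
    intro v
    obtain ⟨y, z, ⟨hc1, hc2, hc3⟩, ht1, ht2⟩ :=
      rank3_exists hτ (bot_lt_gel : (⊥ : Glue n) < gel n 3 v q p03 p3n) (by simp)
    have hzrk : z.rk = 2 := by
      have := (Glue.covBy_iff.mp hc3).2; simp at this; omega
    have hyrk : y.rk = 1 := by
      have := (Glue.covBy_iff.mp hc2).2; omega
    have hzcopy : z.copy = q := by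
      have := Glue.lt_copy_eq hc3.lt (by omega) (by simp; omega)
      simpa using this
    have hycopy : y.copy = q := by
      have := Glue.lt_copy_eq hc2.lt (by rw [hyrk]; omega) (by rw [hzrk]; omega)
      rw [this, hzcopy]
    have hyeq : y = gel n 1 y.side q p01 p1n := eq_gel hyrk hycopy
    have hzeq : z = gel n 2 z.side q p02 p2n := eq_gel hzrk hzcopy
    refine ⟨y.side, z.side, ?_, ?_⟩
    · rw [← hyeq, ← hzeq]; exact ht1
    · rw [← hyeq, ← hzeq]; exact ht2
  -- fixed point argument: a good pair (t, u)
  obtain ⟨t, u, hgood1, hgood2⟩ : ∃ t u : Bool,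
      τ ⊥ (gel n 1 t q p01 p1n) (gel n 2 u q p02 p2n) = true ∧
      τ (gel n 1 t q p01 p1n) (gel n 2 u q p02 p2n) (W u) = true := by
    by_cases hC : (W false).side = (W true).side
    · obtain ⟨t, u, h1, h2⟩ := hG (W false).side
      refine ⟨t, u, h1, ?_⟩
      rw [hWeq u]
      have hcu : (W u).side = (W false).side := by
        cases u
        · rfl
        · exact hC.symm
      rw [hcu]
      exact h2
    · by_cases hsame : ∀ t : Bool, B t (W false).side = B t (W true).side
      · obtain ⟨t, u, h1, h2⟩ := hG (W false).side
        have hu : u = B t (W false).side := hB2 t _ u h2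
        have hBC : B t (W u).side = B t (W false).side := by
          cases u
          · rfl
          · exact (hsame t).symm
        have key : u = B t (W u).side := by rw [hBC]; exact hu
        have h3 := hB1 t (W u).side
        rw [← key] at h3
        refine ⟨t, u, h1, ?_⟩
        rw [hWeq u]
        exact h3
      · push_neg at hsame
        obtain ⟨t, hne⟩ := hsame
        obtain ⟨u0, hu0, huniq0⟩ := hK t
        have hfix : ∀ u : Bool, u = B t (W u).side →
            τ (gel n 1 t q p01 p1n) (gel n 2 u q p02 p2n) (W u) = true := by
          intro u hu
          have h3 := hB1 t (W u).side
          rw [← hu] at h3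
          rw [hWeq u]
          exact h3
        have hfix2 : ∀ u : Bool,
            τ (gel n 1 t q p01 p1n) (gel n 2 u q p02 p2n) (W u) = true →
            u = B t (W u).side := by
          intro u hu
          apply hB2
          rw [← hWeq u]
          exact hu
        exfalso
        have h0 : u0 = B t (W u0).side := hfix2 u0 hu0
        have h1 : B t (W (!u0)).side ≠ !u0 := by
          intro h
          have h9 := huniq0 (!u0) (hfix (!u0) h.symm)
          exact absurd h9 (by cases u0 <;> simp)
        have h2 : B t (W (!u0)).side ≠ u0 := by
          intro h
          apply hne
          cases u0
          · simp only [Bool.not_false] at h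
            rw [h]
            exact h0.symm
          · simp only [Bool.not_true] at h
            rw [h]
            exact h0
        have halt : ∀ a b : Bool, a = b ∨ a = !b := by decide
        rcases halt (B t (W (!u0)).side) u0 with h | h
        · exact h2 h
        · exact h1 h
  -- assemble the rising maximal chain through copy q
  refine ⟨⊥ :: gel n 1 t q p01 p1n :: R u, ⟨?_, ?_⟩, ?_⟩
  · exact satChain_cons (bot_covBy_gel rfl)
      (satChain_cons (gel_covBy rfl) (hP u).1)
  · rw [risingOn_cons (by simp [hlenR]; omega)]
    constructor
    · show τ ⊥ (gel n 1 t q p01 p1n) ((R u).get ⟨0, by rw [hlenR]; omega⟩) = true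
      rw [hR0 u]
      exact hgood1
    · rw [risingOn_cons (by rw [hlenR]; omega)]
      refine ⟨?_, (hP u).2⟩
      rw [hR0 u]
      exact hgood2
  · refine ⟨by simp [hlenR]; omega, ?_⟩
    have h1 : (⊥ :: gel n 1 t q p01 p1n :: R u).get ⟨2, by simp [hlenR]; omega⟩
        = (R u).get ⟨0, by rw [hlenR]; omega⟩ := by simp
    rw [h1, hR0 u]
    simp

/-- For `n ≥ 4`, the poset `P_n` (two butterfly posets glued along
`0̂` and `1̂`) does not admit any triple assignment, and hence does not admit any
`R`-labeling. -/
theorem glue_no_RLabeling (n : ℕ) (hn : 4 ≤ n) :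
    (¬ ∃ τ : Glue n → Glue n → Glue n → Bool, IsTripleAssignment τ) ∧
    ∀ (Λ : Type) (sim : Λ → Λ → Prop) (lab : Glue n → Glue n → Λ),
      ¬ IsRLabeling sim lab := by
  have main : ∀ τ : Glue n → Glue n → Glue n → Bool, ¬ IsTripleAssignment τ := by
    intro τ hτ
    obtain ⟨lf, hlf, h2f, hcf⟩ := copy_rising n hn τ hτ false
    obtain ⟨lt', hlt', h2t, hct⟩ := copy_rising n hn τ hτ true
    have hbot : (⊥ : Glue n) < ⊤ := Glue.lt_def.mpr ⟨by simp; omega, Or.inr (Or.inl rfl)⟩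
    obtain ⟨l0, -, huniq⟩ := hτ ⊥ ⊤ hbot
    have heq : lf = lt' := (huniq lf hlf).trans (huniq lt' hlt').symm
    have hget : lf.get ⟨2, h2f⟩ = lt'.get ⟨2, h2t⟩ := by
      subst heq
      rfl
    rw [hget, hct] at hcf
    exact Bool.noConfusion hcf
  refine ⟨fun ⟨τ, hτ⟩ => main τ hτ, ?_⟩
  intro Λ sim lab hR
  classical
  exact main (fun x y z => decide (sim (lab x y) (lab y z))) (by
    intro x y hxy
    obtain ⟨l, ⟨h1, h2⟩, h3⟩ := hR x y hxy
    refine ⟨l, ⟨h1, fun i h => decide_eq_true (h2 i h)⟩, ?_⟩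
    rintro l' ⟨h1', h2'⟩
    exact h3 l' ⟨h1', fun i h => of_decide_eq_true (h2' i h)⟩)
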